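/- Let m ≥ 1 be an integer, μ > 0 and r > 0 reals, λ = r·μ, and let x be an integer with 0 ≤ x < m. Then B_{m,x}(r) − B_{m,x+1}(r) > 0, and (1/λ)·(L_{m,x+1}(r) − L_{m,x}(r)) / (B_{m,x}(r) − B_{m,x+1}(r)) = 1/μ. -/

import Mathlib

/-- `a_j(r)` coefficients of the M/M/m/n queue. -/
noncomputable def aCoef (m j : ℕ) (r : ℝ) : ℝ :=
  if j ≤ m then r ^ j / (Nat.factorial j : ℝ)
  else (r ^ m / (Nat.factorial m : ℝ)) * (r / (m : ℝ)) ^ (j - m)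

/-- Blocking probability `B_{m,n}(r)` of the M/M/m/n queue with offered load `r`. -/
noncomputable def Bmn (m n : ℕ) (r : ℝ) : ℝ :=
  aCoef m n r / ∑ j ∈ Finset.range (n + 1), aCoef m j r

/-- Mean number in system `L_{m,n}(r)` of the M/M/m/n queue with offered load `r`. -/
noncomputable def Lmn (m n : ℕ) (r : ℝ) : ℝ :=
  (∑ j ∈ Finset.range (n + 1), (j : ℝ) * aCoef m j r) /
    ∑ j ∈ Finset.range (n + 1), aCoef m j r

/-- Erlang-B formula `B_m(r)`. -/
noncomputable def erlangB (m : ℕ) (r : ℝ) : ℝ :=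
  (r ^ m / (Nat.factorial m : ℝ)) / ∑ j ∈ Finset.range (m + 1), r ^ j / (Nat.factorial j : ℝ)

lemma aCoef_pos (m j : ℕ) (r : ℝ) (hm : 1 ≤ m) (hr : 0 < r) : 0 < aCoef m j r := by
  unfold aCoef
  have hmpos : (0:ℝ) < m := by exact_mod_cast hm
  split_ifs <;> positivity

lemma aCoef_succ (m j : ℕ) (r : ℝ) (h : j + 1 ≤ m) :
    aCoef m (j + 1) r = (r / (j + 1)) * aCoef m j r := by
  unfold aCoef
  rw [if_pos h, if_pos (le_trans (Nat.le_succ j) h)]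
  have h1 : ((j:ℝ) + 1) ≠ 0 := by positivity
  have h2 : ((Nat.factorial j : ℝ)) ≠ 0 := by positivity
  rw [Nat.factorial_succ]
  push_cast
  field_simp
  ring

lemma sum_pos' (m n : ℕ) (r : ℝ) (hm : 1 ≤ m) (hr : 0 < r) :
    0 < ∑ j ∈ Finset.range (n + 1), aCoef m j r :=
  Finset.sum_pos (fun j _ => aCoef_pos m j r hm hr) (by simp)

lemma Tsum (m n : ℕ) (r : ℝ) (hn : n ≤ m) :
    ∑ j ∈ Finset.range (n + 1), (j : ℝ) * aCoef m j r
      = r * ∑ j ∈ Finset.range n, aCoef m j r := by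
  induction n with
  | zero => simp
  | succ k ih =>
    rw [Finset.sum_range_succ, ih (by omega), Finset.sum_range_succ,
      aCoef_succ m k r hn]
    have h1 : ((k:ℝ) + 1) ≠ 0 := by positivity
    push_cast
    field_simp

lemma L_eq (m n : ℕ) (r : ℝ) (hm : 1 ≤ m) (hr : 0 < r) (hn : n ≤ m) :
    Lmn m n r = r * (1 - Bmn m n r) := by
  have hS := sum_pos' m n r hm hr
  unfold Lmn Bmn
  rw [Tsum m n r hn, Finset.sum_range_succ]
  have hS' : (∑ j ∈ Finset.range n, aCoef m j r + aCoef m n r) ≠ 0 := by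
    rw [← Finset.sum_range_succ]; exact hS.ne'
  field_simp [hS']
  ring

theorem stmt_1 (m : ℕ) (hm : 1 ≤ m) (μ r : ℝ) (hμ : 0 < μ) (hr : 0 < r)
    (lam : ℝ) (hlam : lam = r * μ) (x : ℕ) (hx : x < m) :
    0 < Bmn m x r - Bmn m (x + 1) r ∧
    (1 / lam) * (Lmn m (x + 1) r - Lmn m x r) / (Bmn m x r - Bmn m (x + 1) r) = 1 / μ := by
  have hx1 : x + 1 ≤ m := hx
  have hSx := sum_pos' m x r hm hr
  have hSx1 := sum_pos' m (x + 1) r hm hr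
  have hax := aCoef_pos m x r hm hr
  -- positivity of B_x - B_{x+1}
  have hkey : aCoef m (x + 1) r * ∑ j ∈ Finset.range (x + 1), aCoef m j r
      < aCoef m x r * ∑ j ∈ Finset.range (x + 2), aCoef m j r := by
    rw [aCoef_succ m x r hx1, Finset.sum_range_succ' (fun j => aCoef m j r) (x + 1)]
    have hterm : ∀ j ∈ Finset.range (x + 1),
        (r / (x + 1)) * aCoef m j r ≤ aCoef m (j + 1) r := by
      intro j hj
      rw [Finset.mem_range] at hj
      rw [aCoef_succ m j r (by omega)]
      have haj := aCoef_pos m j r hm hr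
      have h1 : (0:ℝ) < (j:ℝ) + 1 := by positivity
      have h2 : ((j:ℝ) + 1) ≤ (x:ℝ) + 1 := by
        have : (j:ℝ) ≤ x := by exact_mod_cast Nat.le_of_lt_succ hj
        linarith
      have := div_le_div_of_nonneg_left hr.le h1 h2
      nlinarith [div_nonneg hr.le h1.le]
    have hsum : (r / (x + 1)) * ∑ j ∈ Finset.range (x + 1), aCoef m j r
        ≤ ∑ j ∈ Finset.range (x + 1), aCoef m (j + 1) r := by
      rw [Finset.mul_sum]
      exact Finset.sum_le_sum hterm
    have h0 : 0 < aCoef m 0 r := aCoef_pos m 0 r hm hr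
    calc r / (x + 1) * aCoef m x r * ∑ j ∈ Finset.range (x + 1), aCoef m j r
        = aCoef m x r * ((r / (x + 1)) * ∑ j ∈ Finset.range (x + 1), aCoef m j r) := by ring
      _ ≤ aCoef m x r * ∑ j ∈ Finset.range (x + 1), aCoef m (j + 1) r :=
          mul_le_mul_of_nonneg_left hsum hax.le
      _ < aCoef m x r * (∑ j ∈ Finset.range (x + 1), aCoef m (j + 1) r + aCoef m 0 r) := by
          nlinarith
  have hBpos : 0 < Bmn m x r - Bmn m (x + 1) r := by
    unfold Bmn
    rw [div_sub_div _ _ (ne_of_gt hSx) (ne_of_gt hSx1)]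
    apply div_pos
    · linarith [hkey]
    · positivity
  refine ⟨hBpos, ?_⟩
  have hL1 := L_eq m (x + 1) r hm hr hx1
  have hL0 := L_eq m x r hm hr (by omega)
  rw [hL1, hL0, hlam]
  have hD : Bmn m x r - Bmn m (x + 1) r ≠ 0 := ne_of_gt hBpos
  field_simp
  ring
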